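/- Let h : ℝ → ℝ be locally Lipschitz, let x : [a,b] → ℝⁿ be C¹ with derivative ẋ(t) = f(x(t)) for a continuous f, and suppose t ↦ h(x(t)) is nondecreasing on (b − η, b] for some η > 0. Then the Clarke generalized directional derivative satisfies h⁰(x(b); f(x(b))) ≥ 0. -/

import Mathlib

open Set Filter Topology
open scoped RealInnerProductSpace

/-- The Clarke generalised directional derivative
`h⁰(z;v) = limsup_{y→z, t→0⁺} (h(y+tv) − h(y))/t`. -/
noncomputable def clarkeDirDeriv {n : ℕ} (h : EuclideanSpace ℝ (Fin n) → ℝ)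
    (z v : EuclideanSpace ℝ (Fin n)) : ℝ :=
  limsup (fun p : EuclideanSpace ℝ (Fin n) × ℝ => (h (p.1 + p.2 • v) - h p.1) / p.2)
    ((nhds z) ×ˢ (nhdsWithin 0 (Ioi 0)))

set_option maxHeartbeats 1000000 in
/-- If `h` is locally Lipschitz, `x` is a C¹ curve with `ẋ = f(x)` for a
continuous `f`, and `t ↦ h(x(t))` is nondecreasing on `(b−η, b]`, then
`h⁰(x(b); f(x(b))) ≥ 0`. -/
theorem stmt5 (n : ℕ) (h : EuclideanSpace ℝ (Fin n) → ℝ)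
    (hLip : LocallyLipschitz h)
    (f : EuclideanSpace ℝ (Fin n) → EuclideanSpace ℝ (Fin n)) (hf : Continuous f)
    (a b : ℝ) (hab : a < b)
    (x : ℝ → EuclideanSpace ℝ (Fin n))
    (hx : ∀ t ∈ Icc a b, HasDerivAt x (f (x t)) t)
    (η : ℝ) (hη : 0 < η) (hηb : b - η ∈ Icc a b)
    (hmono : MonotoneOn (fun t => h (x t)) (Ioc (b - η) b)) :
    0 ≤ clarkeDirDeriv h (x b) (f (x b)) := by
  set z : EuclideanSpace ℝ (Fin n) := x b with hzdef
  set v : EuclideanSpace ℝ (Fin n) := f (x b) with hvdef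
  obtain ⟨K, s, hs, hK⟩ := hLip z
  obtain ⟨r, hr, hball⟩ := Metric.mem_nhds_iff.mp hs
  set F := (nhds z) ×ˢ (nhdsWithin (0:ℝ) (Ioi 0)) with hFdef
  set u : EuclideanSpace ℝ (Fin n) × ℝ → ℝ :=
    fun p => (h (p.1 + p.2 • v) - h p.1) / p.2 with hudef
  have hzs : z ∈ s := hball (Metric.mem_ball_self hr)
  -- boundedness of u above along F
  have hbdd : Filter.IsBoundedUnder (· ≤ ·) F u := by
    refine ⟨(K : ℝ) * ‖v‖, ?_⟩
    rw [Filter.eventually_map]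
    have hδ : (0:ℝ) < r / (2 * (‖v‖ + 1)) := by positivity
    have h1 : ∀ᶠ y in nhds z, y ∈ Metric.ball z (r/2) :=
      Metric.ball_mem_nhds z (by linarith)
    have h2 : ∀ᶠ t in nhdsWithin (0:ℝ) (Ioi 0), t ∈ Ioo 0 (r / (2 * (‖v‖ + 1))) :=
      Ioo_mem_nhdsGT_of_mem ⟨le_refl _, hδ⟩
    filter_upwards [h1.prod_mk h2] with p hp
    obtain ⟨hy, ht0, htδ⟩ := hp
    have hvnorm : ‖p.2 • v‖ ≤ r/2 := by
      rw [norm_smul, Real.norm_eq_abs, abs_of_pos ht0]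
      have h3 : p.2 * ‖v‖ ≤ p.2 * (‖v‖ + 1) := by nlinarith [norm_nonneg v]
      have h4 : p.2 * (‖v‖ + 1) ≤ (r / (2 * (‖v‖ + 1))) * (‖v‖ + 1) := by
        apply mul_le_mul_of_nonneg_right htδ.le (by positivity)
      have h5 : (r / (2 * (‖v‖ + 1))) * (‖v‖ + 1) = r/2 := by
        field_simp
      linarith
    have hy1 : p.1 ∈ s := hball (Metric.ball_subset_ball (by linarith) hy)
    have hy2 : p.1 + p.2 • v ∈ s := by
      apply hball
      have : dist (p.1 + p.2 • v) z ≤ dist p.1 z + ‖p.2 • v‖ := by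
        calc dist (p.1 + p.2 • v) z ≤ dist (p.1 + p.2 • v) p.1 + dist p.1 z :=
              dist_triangle _ _ _
          _ = ‖p.2 • v‖ + dist p.1 z := by rw [dist_eq_norm]; simp
          _ = dist p.1 z + ‖p.2 • v‖ := by ring
      have hyz : dist p.1 z < r/2 := Metric.mem_ball.mp hy
      exact Metric.mem_ball.mpr (by linarith)
    have hdist : h (p.1 + p.2 • v) - h p.1 ≤ (K:ℝ) * (p.2 * ‖v‖) := by
      have := hK.dist_le_mul _ hy2 _ hy1
      have hd : dist (p.1 + p.2 • v) p.1 = p.2 * ‖v‖ := by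
        rw [dist_eq_norm]
        simp [norm_smul, Real.norm_eq_abs, abs_of_pos ht0]
      rw [hd] at this
      calc h (p.1 + p.2 • v) - h p.1 ≤ |h (p.1 + p.2 • v) - h p.1| := le_abs_self _
        _ = dist (h (p.1 + p.2 • v)) (h p.1) := (Real.dist_eq _ _).symm
        _ ≤ (K:ℝ) * (p.2 * ‖v‖) := this
    show (h (p.1 + p.2 • v) - h p.1) / p.2 ≤ (K:ℝ) * ‖v‖
    rw [div_le_iff₀ ht0]
    calc h (p.1 + p.2 • v) - h p.1 ≤ (K:ℝ) * (p.2 * ‖v‖) := hdist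
      _ = (K:ℝ) * ‖v‖ * p.2 := by ring
  -- the curve map
  have hderiv : HasDerivAt x v b := hx b ⟨hab.le, le_refl b⟩
  have hcont : ContinuousAt x b := hderiv.continuousAt
  set φ : ℝ → EuclideanSpace ℝ (Fin n) × ℝ := fun t => (x (b - t), t) with hφdef
  have hbt : Filter.Tendsto (fun t : ℝ => b - t) (nhdsWithin (0:ℝ) (Ioi 0)) (nhds b) := by
    have h0 : Filter.Tendsto (fun t : ℝ => b - t) (nhds (0:ℝ)) (nhds (b - 0)) :=
      Filter.Tendsto.const_sub b Filter.tendsto_id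
    simpa using h0.mono_left nhdsWithin_le_nhds
  have hφtend : Filter.Tendsto φ (nhdsWithin (0:ℝ) (Ioi 0)) F := by
    exact Filter.Tendsto.prodMk (hcont.tendsto.comp hbt) Filter.tendsto_id
  -- little-o estimate
  have hlo : (fun t : ℝ => x (b - t) - z + t • v) =o[nhdsWithin (0:ℝ) (Ioi 0)]
      (fun t : ℝ => t) := by
    have h1 := hasDerivAt_iff_isLittleO.mp hderiv
    have h3 := h1.comp_tendsto hbt
    have h4 : ((fun t' => x t' - x b - (t' - b) • v) ∘ (fun t : ℝ => b - t))
        = fun t : ℝ => x (b - t) - z + t • v := by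
      funext t
      simp only [Function.comp_apply, hzdef]
      congr 1
      rw [sub_eq_add_neg]
      congr 1
      rw [show b - t - b = -t by ring, neg_smul, neg_neg]
    rw [h4] at h3
    have h5 : ((fun t' : ℝ => t' - b) ∘ (fun t : ℝ => b - t)) = fun t : ℝ => -t := by
      funext t; simp [Function.comp]
    rw [h5] at h3
    exact h3.trans_isBigO ((Asymptotics.isBigO_refl (fun t : ℝ => t) _).neg_left)
  -- frequently bound below
  have hfreq : ∀ ε : ℝ, 0 < ε → -ε ≤ limsup u F := by
    intro ε hε
    set ε' : ℝ := ε / ((K:ℝ) + 1) with hε'def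
    have hε' : 0 < ε' := by positivity
    have hev1 : ∀ᶠ t in nhdsWithin (0:ℝ) (Ioi 0),
        ‖x (b - t) - z + t • v‖ ≤ ε' * ‖t‖ := hlo.def hε'
    have hev2 : ∀ᶠ t in nhdsWithin (0:ℝ) (Ioi 0),
        t ∈ Ioo 0 (min η (r / (ε' + ‖v‖ + 1))) :=
      Ioo_mem_nhdsGT_of_mem ⟨le_refl _, lt_min hη (by positivity)⟩
    have hkey : ∀ᶠ t in nhdsWithin (0:ℝ) (Ioi 0), -ε ≤ u (φ t) := by
      filter_upwards [hev1, hev2] with t hlt ht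
      obtain ⟨ht0, htm⟩ := ht
      have htη : t < η := lt_of_lt_of_le htm (min_le_left _ _)
      have htr : t < r / (ε' + ‖v‖ + 1) := lt_of_lt_of_le htm (min_le_right _ _)
      have htabs : ‖t‖ = t := by rw [Real.norm_eq_abs, abs_of_pos ht0]
      rw [htabs] at hlt
      -- point locations
      have hp2 : x (b - t) + t • v ∈ Metric.ball z r := by
        rw [Metric.mem_ball, dist_eq_norm]
        have : x (b - t) + t • v - z = x (b - t) - z + t • v := by abel
        rw [this]
        calc ‖x (b - t) - z + t • v‖ ≤ ε' * t := hlt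
          _ < r := by
            have : t * (ε' + ‖v‖ + 1) < r := by
              rw [← lt_div_iff₀ (by positivity)] at *
              linarith [htr]
            nlinarith [norm_nonneg v, hε'.le, ht0]
      have hp1 : x (b - t) ∈ Metric.ball z r := by
        rw [Metric.mem_ball, dist_eq_norm]
        have heq : x (b - t) - z = (x (b - t) - z + t • v) - t • v := by abel
        rw [heq]
        have hsv : ‖t • v‖ = t * ‖v‖ := by
          rw [norm_smul, Real.norm_eq_abs, abs_of_pos ht0]
        calc ‖(x (b - t) - z + t • v) - t • v‖
            ≤ ‖x (b - t) - z + t • v‖ + ‖t • v‖ := norm_sub_le _ _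
          _ ≤ ε' * t + t * ‖v‖ := by rw [hsv]; linarith
          _ < r := by
            have h6 : t * (ε' + ‖v‖ + 1) < r := by
              calc t * (ε' + ‖v‖ + 1) < (r / (ε' + ‖v‖ + 1)) * (ε' + ‖v‖ + 1) := by
                    apply mul_lt_mul_of_pos_right htr (by positivity)
                _ = r := by field_simp
            nlinarith [ht0]
      -- Lipschitz estimate
      have hlip : h z - h (x (b - t) + t • v) ≤ (K:ℝ) * (ε' * t) := by
        have := hK.dist_le_mul _ hzs _ (hball hp2)
        have hd : dist z (x (b - t) + t • v) ≤ ε' * t := by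
          rw [dist_eq_norm]
          have : z - (x (b - t) + t • v) = -(x (b - t) - z + t • v) := by abel
          rw [this, norm_neg]
          exact hlt
        calc h z - h (x (b - t) + t • v) ≤ |h z - h (x (b - t) + t • v)| := le_abs_self _
          _ = dist (h z) (h (x (b - t) + t • v)) := (Real.dist_eq _ _).symm
          _ ≤ (K:ℝ) * dist z (x (b - t) + t • v) := this
          _ ≤ (K:ℝ) * (ε' * t) := by
            apply mul_le_mul_of_nonneg_left hd (K.coe_nonneg)
      -- monotonicity
      have hmon : h (x (b - t)) ≤ h z := by
        have := hmono (a := b - t) (b := b) ⟨by linarith, by linarith⟩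
          ⟨by linarith, le_refl b⟩ (by linarith)
        simpa using this
      -- combine
      show -ε ≤ (h (x (b - t) + t • v) - h (x (b - t))) / t
      rw [le_div_iff₀ ht0]
      have hεbound : (K:ℝ) * ε' ≤ ε := by
        calc (K:ℝ) * ε' ≤ ((K:ℝ) + 1) * ε' := by nlinarith [hε'.le]
          _ = ε := by rw [hε'def]; field_simp
      have hprod : 0 ≤ (ε - (K:ℝ) * ε') * t :=
        mul_nonneg (by linarith) ht0.le
      nlinarith [hlip, hmon]
    -- push to F
    have hfr : ∃ᶠ p in F, -ε ≤ u p := by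
      have h1 : ∃ᶠ t in nhdsWithin (0:ℝ) (Ioi 0), -ε ≤ u (φ t) := hkey.frequently
      have h2 : ∃ᶠ p in Filter.map φ (nhdsWithin (0:ℝ) (Ioi 0)), -ε ≤ u p := by
        rwa [Filter.frequently_map]
      exact h2.filter_mono hφtend
    exact Filter.le_limsup_of_frequently_le hfr hbdd
  -- conclude
  have : ∀ ε : ℝ, 0 < ε → (0:ℝ) ≤ limsup u F + ε := by
    intro ε hε
    linarith [hfreq ε hε]
  have h0 : (0:ℝ) ≤ limsup u F := le_of_forall_pos_le_add this
  exact h0
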